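/- Let g : ℝ → ℝ be differentiable, C ∈ ℝ, and f(t,v,s,u) = eᵗ·g(s) + C, and suppose X : ℝ⁴ → ℝ⁴ satisfies (ω₁)_p(w, X(p)) = Df_p(w) for all p, w ∈ ℝ⁴. Then for every p = (t, v, s, u) ∈ ℝ⁴, eᵗ·(X(p)₂ − u·X(p)₃) − f(p) = −C; that is, the contraction ι_X(eᵗα) minus f is constantly equal to −C. -/

import Mathlib

/-- The symplectization form `ω₁ = d(eᵗ(dv − u ds))` at the point `p = (t, v, s, u)`,
as an alternating bilinear form on `ℝ⁴`. -/
noncomputable def omega1 (p x y : Fin 4 → ℝ) : ℝ :=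
  Real.exp (p 0) *
    ((x 0 * y 1 - x 1 * y 0) - p 3 * (x 0 * y 2 - x 2 * y 0) - (x 3 * y 2 - x 2 * y 3))

/-- For the cylindrical function `f(t, v, s, u) = eᵗ·g(s) + C` and any Hamiltonian vector
field `X` for `f` with respect to `ω₁`, the contraction `ι_X(eᵗα)` minus `f` is constantly
equal to `−C`: for every `p = (t, v, s, u)`, `eᵗ·(X(p)₂ − u·X(p)₃) − f(p) = −C`. -/
theorem contraction_sub_cylindrical_eq_neg_const (g : ℝ → ℝ) (hg : Differentiable ℝ g)
    (C : ℝ) (f : (Fin 4 → ℝ) → ℝ)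
    (hf : ∀ p : Fin 4 → ℝ, f p = Real.exp (p 0) * g (p 2) + C)
    (X : (Fin 4 → ℝ) → Fin 4 → ℝ)
    (hX : ∀ p w : Fin 4 → ℝ, omega1 p w (X p) = fderiv ℝ f p w)
    (p : Fin 4 → ℝ) :
    Real.exp (p 0) * (X p 1 - p 3 * X p 2) - f p = -C := by
  have hfun : f = fun q : Fin 4 → ℝ => Real.exp (q 0) * g (q 2) + C := funext hf
  -- derivative of f at p
  have h0 : HasFDerivAt (fun q : Fin 4 → ℝ => q 0)
      (ContinuousLinearMap.proj 0 : (Fin 4 → ℝ) →L[ℝ] ℝ) p :=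
    (ContinuousLinearMap.proj (R := ℝ) (φ := fun _ : Fin 4 => ℝ) 0).hasFDerivAt
  have h2 : HasFDerivAt (fun q : Fin 4 → ℝ => q 2)
      (ContinuousLinearMap.proj 2 : (Fin 4 → ℝ) →L[ℝ] ℝ) p :=
    (ContinuousLinearMap.proj (R := ℝ) (φ := fun _ : Fin 4 => ℝ) 2).hasFDerivAt
  have hexp : HasFDerivAt (fun q : Fin 4 → ℝ => Real.exp (q 0))
      (Real.exp (p 0) • (ContinuousLinearMap.proj 0 : (Fin 4 → ℝ) →L[ℝ] ℝ)) p := by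
    have := (Real.hasDerivAt_exp (p 0)).comp_hasFDerivAt p h0
    exact this
  have hgc : HasFDerivAt (fun q : Fin 4 → ℝ => g (q 2))
      (deriv g (p 2) • (ContinuousLinearMap.proj 2 : (Fin 4 → ℝ) →L[ℝ] ℝ)) p := by
    have := ((hg (p 2)).hasDerivAt).comp_hasFDerivAt p h2
    exact this
  have hF : HasFDerivAt f
      (Real.exp (p 0) • (deriv g (p 2) • (ContinuousLinearMap.proj 2 : (Fin 4 → ℝ) →L[ℝ] ℝ))
        + g (p 2) • (Real.exp (p 0) • (ContinuousLinearMap.proj 0 : (Fin 4 → ℝ) →L[ℝ] ℝ))) p := by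
    rw [hfun]
    exact (hexp.mul hgc).add_const C
  have hfd := hF.fderiv
  have key := hX p (Pi.single 0 1)
  rw [hfd] at key
  have hsingle0 : (Pi.single 0 1 : Fin 4 → ℝ) 0 = 1 := by simp
  have hsingle1 : (Pi.single 0 1 : Fin 4 → ℝ) 1 = 0 := by simp [Pi.single_apply]
  have hsingle2 : (Pi.single 0 1 : Fin 4 → ℝ) 2 = 0 := by simp [Pi.single_apply]
  have hsingle3 : (Pi.single 0 1 : Fin 4 → ℝ) 3 = 0 := by simp [Pi.single_apply]
  simp only [omega1, ContinuousLinearMap.add_apply, ContinuousLinearMap.smul_apply,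
    ContinuousLinearMap.proj_apply, hsingle0, hsingle1, hsingle2, hsingle3,
    smul_eq_mul] at key
  rw [hf p]
  ring_nf
  ring_nf at key
  linarith [key]
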